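/- Suppose q ≡ 1 (mod 8). With H_0 = D_0 ∪ D_2, H_1 = D_1 ∪ D_3 and H_i(x) = ∑_{u ∈ H_i} x^u, one has in GR(4, 4^ℓ): (H_0(β))^2 = (0,0)·H_0(β) + (0,1)·H_1(β), where (0,0) = |(H_0 + 1) ∩ H_0| and (0,1) = |(H_0 + 1) ∩ H_1| are the generalized cyclotomic numbers of order 2 (here H_0 + 1 denotes the set {w + 1 mod pq : w ∈ H_0}, and the cardinalities are mapped into GR(4, 4^ℓ)). -/

import Mathlib

open Finset


section CRT
variable (p q : ℕ) [Fact (Nat.Prime p)] [Fact (Nat.Prime q)]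

lemma crt_inj (hpq : Nat.Coprime p q) {x y : ZMod (p * q)}
    (h1 : ZMod.castHom (dvd_mul_right p q) (ZMod p) x
        = ZMod.castHom (dvd_mul_right p q) (ZMod p) y)
    (h2 : ZMod.castHom (dvd_mul_left q p) (ZMod q) x
        = ZMod.castHom (dvd_mul_left q p) (ZMod q) y) : x = y := by
  haveI : NeZero (p * q) := ⟨Nat.mul_ne_zero (Fact.out (p := p.Prime)).ne_zero
    (Fact.out (p := q.Prime)).ne_zero⟩
  have hz1 : ZMod.castHom (dvd_mul_right p q) (ZMod p) (x - y) = 0 := by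
    rw [map_sub, h1, sub_self]
  have hz2 : ZMod.castHom (dvd_mul_left q p) (ZMod q) (x - y) = 0 := by
    rw [map_sub, h2, sub_self]
  have hval : ∀ z : ZMod (p * q), ((z.val : ℕ) : ZMod (p*q)) = z :=
    fun z => ZMod.natCast_rightInverse z
  have hp' : p ∣ (x - y).val := by
    rw [← ZMod.natCast_eq_zero_iff]
    rw [← hval (x - y), map_natCast] at hz1
    exact hz1
  have hq' : q ∣ (x - y).val := by
    rw [← ZMod.natCast_eq_zero_iff]
    rw [← hval (x - y), map_natCast] at hz2
    exact hz2
  have h0 : (x - y).val = 0 := by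
    rcases Nat.eq_zero_or_pos (x - y).val with h | h
    · exact h
    · exact absurd (Nat.le_of_dvd h (hpq.mul_dvd_of_dvd_of_dvd hp' hq'))
        (not_le.mpr (ZMod.val_lt _))
  have : x - y = 0 := by rw [← hval (x - y), h0, Nat.cast_zero]
  exact sub_eq_zero.mp this


end CRT


section CRT
variable (p q : ℕ) [Fact (Nat.Prime p)] [Fact (Nat.Prime q)]

lemma crt_lift (hpq : Nat.Coprime p q) (a : ZMod p) (b : ZMod q) :
    ∃ z : ZMod (p * q), ZMod.castHom (dvd_mul_right p q) (ZMod p) z = a ∧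
      ZMod.castHom (dvd_mul_left q p) (ZMod q) z = b := by
  obtain ⟨N, hN1, hN2⟩ := Nat.chineseRemainder hpq a.val b.val
  refine ⟨(N : ZMod (p * q)), ?_, ?_⟩
  · rw [map_natCast]
    rw [(ZMod.natCast_eq_natCast_iff _ _ _).mpr hN1]
    exact ZMod.natCast_rightInverse a
  · rw [map_natCast]
    rw [(ZMod.natCast_eq_natCast_iff _ _ _).mpr hN2]
    exact ZMod.natCast_rightInverse b

lemma crt_isUnit_iff (hpq : Nat.Coprime p q) (z : ZMod (p * q)) :
    IsUnit z ↔ IsUnit (ZMod.castHom (dvd_mul_right p q) (ZMod p) z) ∧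
      IsUnit (ZMod.castHom (dvd_mul_left q p) (ZMod q) z) := by
  constructor
  · exact fun hz => ⟨hz.map _, hz.map _⟩
  · rintro ⟨⟨ua, hua⟩, ⟨ub, hub⟩⟩
    obtain ⟨w, hw1, hw2⟩ := crt_lift p q hpq ((ua⁻¹ : (ZMod p)ˣ) : ZMod p)
      ((ub⁻¹ : (ZMod q)ˣ) : ZMod q)
    refine IsUnit.of_mul_eq_one w (crt_inj p q hpq ?_ ?_)
    · rw [map_mul, hw1, map_one, ← hua, Units.mul_inv]
    · rw [map_mul, hw2, map_one, ← hub, Units.mul_inv]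

end CRT

section Cyclic
variable (r : ℕ) [Fact (Nat.Prime r)] (g : ℕ)

lemma g_isUnit (hg : orderOf (g : ZMod r) = r - 1) : IsUnit (g : ZMod r) := by
  have : orderOf (g : ZMod r) ≠ 0 := by
    rw [hg]
    have := (Fact.out (p := r.Prime)).two_le
    omega
  have hfin : IsOfFinOrder (g : ZMod r) := by
    by_contra hc
    exact this (orderOf_eq_zero_iff.mpr hc)
  exact hfin.isUnit

lemma exists_dlog (hg : orderOf (g : ZMod r) = r - 1) (b : ZMod r) (hb : IsUnit b) : ∃ k : ℕ, b = (g : ZMod r) ^ k := by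
  have hgu := g_isUnit r g hg
  set gu := hgu.unit with hgu'
  have hgval : (gu : ZMod r) = (g : ZMod r) := hgu.unit_spec
  have hordu : orderOf gu = r - 1 := by
    rw [← orderOf_units, hgval]; exact hg
  have htop : Subgroup.zpowers gu = ⊤ := by
    apply Subgroup.eq_top_of_card_eq
    rw [Nat.card_zpowers, hordu, Nat.card_eq_fintype_card, ZMod.card_units]
  have hmem : hb.unit ∈ Submonoid.powers gu := by
    rw [mem_powers_iff_mem_zpowers, htop]
    trivial
  obtain ⟨k, hk⟩ := hmem
  have hk' : gu ^ k = hb.unit := hk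
  refine ⟨k, ?_⟩
  have : ((gu ^ k : (ZMod r)ˣ) : ZMod r) = (hb.unit : ZMod r) := by rw [hk']
  rw [hb.unit_spec] at this
  rw [← this, Units.val_pow_eq_pow_val, hgval]

lemma isSquare_pow_iff (hg : orderOf (g : ZMod r) = r - 1) (hr2 : 2 ∣ r - 1) (k : ℕ) :
    IsSquare ((g : ZMod r) ^ k) ↔ Even k := by
  constructor
  · rintro ⟨c, hc⟩
    have hcu : IsUnit c := by
      have : IsUnit ((g : ZMod r) ^ k) := (g_isUnit r g hg).pow k
      rw [hc] at this
      exact isUnit_of_mul_isUnit_left this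
    obtain ⟨m, hm⟩ := exists_dlog r g hg c hcu
    have hval : (g : ZMod r) ^ k = (g : ZMod r) ^ (m + m) := by
      rw [hc, hm, pow_add]
    have hgu := g_isUnit r g hg
    have hgval : (hgu.unit : ZMod r) = (g : ZMod r) := hgu.unit_spec
    have hordu : orderOf hgu.unit = r - 1 := by rw [← orderOf_units, hgval]; exact hg
    have huval : hgu.unit ^ k = hgu.unit ^ (m + m) := by
      apply Units.ext
      rw [Units.val_pow_eq_pow_val, Units.val_pow_eq_pow_val, hgval]
      exact hval
    rw [pow_eq_pow_iff_modEq, hordu] at huval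
    obtain ⟨t, ht⟩ := huval.dvd
    obtain ⟨E, hE⟩ := hr2
    rw [hE] at ht
    have ht' : ((m : ℤ) + m) - k = 2 * (E * t) := by push_cast at ht ⊢; linarith [ht]
    generalize hw : (E : ℤ) * t = w at ht'
    rw [Nat.even_iff]
    omega
  · rintro ⟨t, ht⟩
    exact ⟨(g : ZMod r) ^ t, by rw [← pow_add, ht]⟩

end Cyclic

lemma four_eq_zero (K : Type*) [CommRing K] [CharP K 2] :
    (4 : TruncatedWittVector 2 2 K) = 0 := by
  have h2 : (2 : TruncatedWittVector 2 2 K)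
      = WittVector.truncate 2 (2 : WittVector 2 K) :=
    (map_ofNat (WittVector.truncate (p := 2) (R := K) 2) 2).symm
  have : (4 : TruncatedWittVector 2 2 K) = (2 : TruncatedWittVector 2 2 K) ^ 2 := by norm_num
  rw [this, h2, ← map_pow]
  ext i
  rw [WittVector.coeff_truncate]
  have hne : (i : ℕ) ≠ 2 := by omega
  rw [show (2 : WittVector 2 K) = ((2 : ℕ) : WittVector 2 K) by norm_cast]
  rw [WittVector.coeff_p_pow_eq_zero (p := 2) (R := K) hne]
  simp
lemma pow_eq_of_modEq (r g : ℕ) [Fact (Nat.Prime r)] (hg : orderOf (g : ZMod r) = r - 1)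
    {A B : ℕ} (hAB : A ≡ B [MOD r - 1]) : (g : ZMod r) ^ A = (g : ZMod r) ^ B := by
  have hgu := g_isUnit r g hg
  have hgval : (hgu.unit : ZMod r) = (g : ZMod r) := hgu.unit_spec
  have hordu : orderOf hgu.unit = r - 1 := by rw [← orderOf_units, hgval]; exact hg
  have : hgu.unit ^ A = hgu.unit ^ B := by
    rw [pow_eq_pow_iff_modEq, hordu]; exact hAB
  calc (g : ZMod r) ^ A = ((hgu.unit ^ A : (ZMod r)ˣ) : ZMod r) := by
        rw [Units.val_pow_eq_pow_val, hgval]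
    _ = ((hgu.unit ^ B : (ZMod r)ˣ) : ZMod r) := by rw [this]
    _ = (g : ZMod r) ^ B := by rw [Units.val_pow_eq_pow_val, hgval]
set_option linter.unusedSectionVars false
section ASets
open scoped Classical

variable (p q g : ℕ)

noncomputable def A0 [NeZero (p * q)] : Finset (ZMod (p * q)) :=
  Finset.univ.filter (fun x => IsUnit x ∧
    IsSquare (ZMod.castHom (dvd_mul_left q p) (ZMod q) x))

noncomputable def A1 [NeZero (p * q)] : Finset (ZMod (p * q)) :=
  Finset.univ.filter (fun x => IsUnit x ∧
    ¬ IsSquare (ZMod.castHom (dvd_mul_left q p) (ZMod q) x))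

variable [Fact (Nat.Prime p)] [Fact (Nat.Prime q)] [NeZero (p * q)]

lemma mem_A0 (x : ZMod (p * q)) : x ∈ A0 p q ↔ IsUnit x ∧
    IsSquare (ZMod.castHom (dvd_mul_left q p) (ZMod q) x) := by
  simp only [A0, Finset.mem_filter, Finset.mem_univ, true_and]

lemma mem_A1 (x : ZMod (p * q)) : x ∈ A1 p q ↔ IsUnit x ∧
    ¬ IsSquare (ZMod.castHom (dvd_mul_left q p) (ZMod q) x) := by
  simp only [A1, Finset.mem_filter, Finset.mem_univ, true_and]

lemma class_mul (hgq : orderOf (g : ZMod q) = q - 1) (hq2 : 2 ∣ q - 1)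
    (a b : ZMod q) (ha : IsUnit a) (hb : IsUnit b) :
    IsSquare (a * b) ↔ (IsSquare a ↔ IsSquare b) := by
  obtain ⟨i, rfl⟩ := exists_dlog q g hgq a ha
  obtain ⟨j, rfl⟩ := exists_dlog q g hgq b hb
  rw [← pow_add, isSquare_pow_iff q g hgq hq2, isSquare_pow_iff q g hgq hq2,
    isSquare_pow_iff q g hgq hq2, Nat.even_add]

lemma image_A0_A0 (hpq : Nat.Coprime p q) (hgq : orderOf (g : ZMod q) = q - 1)
    (hq2 : 2 ∣ q - 1) {u : ZMod (p * q)} (hu : u ∈ A0 p q) :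
    (A0 p q).image (u * ·) = A0 p q := by
  obtain ⟨huu, hus⟩ := (mem_A0 p q u).mp hu
  apply Finset.eq_of_subset_of_card_le
  · intro z hz
    obtain ⟨w, hw, rfl⟩ := Finset.mem_image.mp hz
    obtain ⟨hwu, hws⟩ := (mem_A0 p q w).mp hw
    rw [mem_A0]
    refine ⟨huu.mul hwu, ?_⟩
    rw [map_mul]
    rw [class_mul q g hgq hq2 _ _ (huu.map _) (hwu.map _)]
    tauto
  · rw [Finset.card_image_of_injective _ huu.mul_right_injective]

lemma card_A0_A1 (hpq : Nat.Coprime p q) (hgq : orderOf (g : ZMod q) = q - 1)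
    (hq2 : 2 ∣ q - 1) :
    (A0 p q).card = (A1 p q).card := by
  -- an element of A1 exists: lift of (1, g)
  obtain ⟨u, hu1, hu2⟩ := crt_lift p q hpq 1 (g : ZMod q)
  have hgu : IsUnit (g : ZMod q) := g_isUnit q g hgq
  have huu : IsUnit u := by
    rw [crt_isUnit_iff p q hpq, hu1, hu2]
    exact ⟨isUnit_one, hgu⟩
  have hns : ¬ IsSquare ((ZMod.castHom (dvd_mul_left q p) (ZMod q)) u) := by
    rw [hu2, show (g : ZMod q) = (g : ZMod q) ^ 1 by rw [pow_one],
      isSquare_pow_iff q g hgq hq2]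
    simp
  have huA1 : u ∈ A1 p q := (mem_A1 p q u).mpr ⟨huu, hns⟩
  have h01 : (A0 p q).image (u * ·) ⊆ A1 p q := by
    intro z hz
    obtain ⟨w, hw, rfl⟩ := Finset.mem_image.mp hz
    obtain ⟨hwu, hws⟩ := (mem_A0 p q w).mp hw
    rw [mem_A1]
    refine ⟨huu.mul hwu, ?_⟩
    rw [map_mul, class_mul q g hgq hq2 _ _ (huu.map _) (hwu.map _)]
    tauto
  have h10 : (A1 p q).image (u * ·) ⊆ A0 p q := by
    intro z hz
    obtain ⟨w, hw, rfl⟩ := Finset.mem_image.mp hz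
    obtain ⟨hwu, hws⟩ := (mem_A1 p q w).mp hw
    rw [mem_A0]
    refine ⟨huu.mul hwu, ?_⟩
    rw [map_mul, class_mul q g hgq hq2 _ _ (huu.map _) (hwu.map _)]
    tauto
  have c1 : (A0 p q).card ≤ (A1 p q).card := by
    calc (A0 p q).card = ((A0 p q).image (u * ·)).card :=
          (Finset.card_image_of_injective _ huu.mul_right_injective).symm
      _ ≤ (A1 p q).card := Finset.card_le_card h01
  have c2 : (A1 p q).card ≤ (A0 p q).card := by
    calc (A1 p q).card = ((A1 p q).image (u * ·)).card :=
          (Finset.card_image_of_injective _ huu.mul_right_injective).symm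
      _ ≤ (A0 p q).card := Finset.card_le_card h10
  omega

lemma image_A0_A1 (hpq : Nat.Coprime p q) (hgq : orderOf (g : ZMod q) = q - 1)
    (hq2 : 2 ∣ q - 1) {u : ZMod (p * q)} (hu : u ∈ A1 p q) :
    (A0 p q).image (u * ·) = A1 p q := by
  obtain ⟨huu, hus⟩ := (mem_A1 p q u).mp hu
  apply Finset.eq_of_subset_of_card_le
  · intro z hz
    obtain ⟨w, hw, rfl⟩ := Finset.mem_image.mp hz
    obtain ⟨hwu, hws⟩ := (mem_A0 p q w).mp hw
    rw [mem_A1]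
    refine ⟨huu.mul hwu, ?_⟩
    rw [map_mul, class_mul q g hgq hq2 _ _ (huu.map _) (hwu.map _)]
    tauto
  · rw [Finset.card_image_of_injective _ huu.mul_right_injective,
      card_A0_A1 p q g hpq hgq hq2]

end ASets
section Fibers
open scoped Classical
open Finset

variable (p q g : ℕ) [Fact (Nat.Prime p)] [Fact (Nat.Prime q)] [NeZero (p * q)]

lemma sq_card (hgq : orderOf (g : ZMod q) = q - 1) (hq2 : 2 ∣ q - 1) :
    (Finset.univ.filter (fun b : ZMod q => IsUnit b ∧ IsSquare b)).card = (q - 1) / 2 := by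
  have hq2' : q - 1 = 2 * ((q - 1) / 2) := by omega
  set E : ℕ := (q - 1) / 2 with hE
  have himg : Finset.univ.filter (fun b : ZMod q => IsUnit b ∧ IsSquare b)
      = (Finset.range E).image (fun t => (g : ZMod q) ^ (2 * t)) := by
    ext b
    simp only [Finset.mem_filter, Finset.mem_univ, true_and, Finset.mem_image,
      Finset.mem_range]
    constructor
    · rintro ⟨hbu, hbs⟩
      obtain ⟨k, rfl⟩ := exists_dlog q g hgq b hbu
      rw [isSquare_pow_iff q g hgq hq2] at hbs
      obtain ⟨m, hm⟩ := hbs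
      have hq3 := (Fact.out (p := q.Prime)).two_le
      refine ⟨m % E, Nat.mod_lt _ (by omega), ?_⟩
      apply pow_eq_of_modEq q g hgq
      have hdm : E * (m / E) + m % E = m := Nat.div_add_mod m E
      have hkeq : k = (m / E) * (q - 1) + 2 * (m % E) := by
        rw [hq2']
        generalize hT : E * (m / E) = T at hdm
        have : (m / E) * (2 * E) = 2 * T := by rw [← hT]; ring
        omega
      rw [hkeq]
      show 2 * (m % E) % (q - 1) = ((m / E) * (q - 1) + 2 * (m % E)) % (q - 1)
      rw [add_comm, Nat.add_mul_mod_self_right]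
    · rintro ⟨t, ht, rfl⟩
      exact ⟨(g_isUnit q g hgq).pow _, (isSquare_pow_iff q g hgq hq2 _).mpr ⟨t, by ring⟩⟩
  rw [himg, Finset.card_image_of_injOn, Finset.card_range]
  intro t1 h1 t2 h2 heq
  simp only [Finset.coe_range, Set.mem_Iio] at h1 h2
  have hgu := g_isUnit q g hgq
  have hgval : (hgu.unit : ZMod q) = (g : ZMod q) := hgu.unit_spec
  have hordu : orderOf hgu.unit = q - 1 := by rw [← orderOf_units, hgval]; exact hgq
  have : hgu.unit ^ (2 * t1) = hgu.unit ^ (2 * t2) := by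
    apply Units.ext
    rw [Units.val_pow_eq_pow_val, Units.val_pow_eq_pow_val, hgval]
    exact heq
  rw [pow_eq_pow_iff_modEq, hordu] at this
  have h1' : 2 * t1 < q - 1 := by omega
  have h2' : 2 * t2 < q - 1 := by omega
  have := Nat.ModEq.eq_of_lt_of_lt this h1' h2'
  omega
end Fibers
section Fibers2
open scoped Classical
open Finset

variable (p q g : ℕ) [Fact (Nat.Prime p)] [Fact (Nat.Prime q)] [NeZero (p * q)]

lemma units_card : (Finset.univ.filter (fun a : ZMod p => IsUnit a)).card = p - 1 := by
  have : (Finset.univ.filter (fun a : ZMod p => IsUnit a))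
      = Finset.univ.erase (0 : ZMod p) := by
    ext a
    simp [isUnit_iff_ne_zero, Finset.mem_erase, and_comm]
  rw [this, Finset.card_erase_of_mem (Finset.mem_univ _), Finset.card_univ, ZMod.card]

lemma fiber_p_dvd (hpq : Nat.Coprime p q) (hgq : orderOf (g : ZMod q) = q - 1)
    (hq2 : 2 ∣ q - 1) (hq8div : 4 ∣ (q - 1) / 2) (a : ZMod p) :
    4 ∣ ((A0 p q).filter
      (fun x => ZMod.castHom (dvd_mul_right p q) (ZMod p) x = a)).card := by
  by_cases ha : IsUnit a
  · have hcard : ((A0 p q).filter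
        (fun x => ZMod.castHom (dvd_mul_right p q) (ZMod p) x = a)).card
        = (Finset.univ.filter (fun b : ZMod q => IsUnit b ∧ IsSquare b)).card := by
      apply Finset.card_bij
        (fun x _ => ZMod.castHom (dvd_mul_left q p) (ZMod q) x)
      · intro x hx
        obtain ⟨hxA, _⟩ := Finset.mem_filter.mp hx
        obtain ⟨hxu, hxs⟩ := (mem_A0 p q x).mp hxA
        simp only [Finset.mem_filter, Finset.mem_univ, true_and]
        exact ⟨hxu.map _, hxs⟩
      · intro x1 h1 x2 h2 heq
        obtain ⟨_, ha1⟩ := Finset.mem_filter.mp h1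
        obtain ⟨_, ha2⟩ := Finset.mem_filter.mp h2
        exact crt_inj p q hpq (by rw [ha1, ha2]) heq
      · intro b hb
        obtain ⟨hbu, hbs⟩ := (Finset.mem_filter.mp hb).2
        obtain ⟨z, hz1, hz2⟩ := crt_lift p q hpq a b
        refine ⟨z, ?_, hz2⟩
        rw [Finset.mem_filter, mem_A0]
        refine ⟨⟨?_, by rw [hz2]; exact hbs⟩, hz1⟩
        rw [crt_isUnit_iff p q hpq, hz1, hz2]
        exact ⟨ha, hbu⟩
    rw [hcard, sq_card q g hgq hq2]
    exact hq8div
  · have : ((A0 p q).filter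
        (fun x => ZMod.castHom (dvd_mul_right p q) (ZMod p) x = a)) = ∅ := by
      apply Finset.eq_empty_of_forall_notMem
      intro x hx
      obtain ⟨hxA, hxa⟩ := Finset.mem_filter.mp hx
      exact ha (hxa ▸ ((mem_A0 p q x).mp hxA).1.map _)
    rw [this]
    simp

lemma fiber_q_dvd (hpq : Nat.Coprime p q) (hp4 : 4 ∣ p - 1) (b : ZMod q) :
    4 ∣ ((A0 p q).filter
      (fun x => ZMod.castHom (dvd_mul_left q p) (ZMod q) x = b)).card := by
  by_cases hb : IsUnit b ∧ IsSquare b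
  · have hcard : ((A0 p q).filter
        (fun x => ZMod.castHom (dvd_mul_left q p) (ZMod q) x = b)).card
        = (Finset.univ.filter (fun a : ZMod p => IsUnit a)).card := by
      apply Finset.card_bij
        (fun x _ => ZMod.castHom (dvd_mul_right p q) (ZMod p) x)
      · intro x hx
        obtain ⟨hxA, _⟩ := Finset.mem_filter.mp hx
        obtain ⟨hxu, _⟩ := (mem_A0 p q x).mp hxA
        simp only [Finset.mem_filter, Finset.mem_univ, true_and]
        exact hxu.map _
      · intro x1 h1 x2 h2 heq
        obtain ⟨_, hb1⟩ := Finset.mem_filter.mp h1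
        obtain ⟨_, hb2⟩ := Finset.mem_filter.mp h2
        exact crt_inj p q hpq heq (by rw [hb1, hb2])
      · intro a ha
        have hau : IsUnit a := (Finset.mem_filter.mp ha).2
        obtain ⟨z, hz1, hz2⟩ := crt_lift p q hpq a b
        refine ⟨z, ?_, hz1⟩
        rw [Finset.mem_filter, mem_A0]
        refine ⟨⟨?_, by rw [hz2]; exact hb.2⟩, hz2⟩
        rw [crt_isUnit_iff p q hpq, hz1, hz2]
        exact ⟨hau, hb.1⟩
    rw [hcard, units_card p]
    exact hp4
  · have : ((A0 p q).filter
        (fun x => ZMod.castHom (dvd_mul_left q p) (ZMod q) x = b)) = ∅ := by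
      apply Finset.eq_empty_of_forall_notMem
      intro x hx
      obtain ⟨hxA, hxb⟩ := Finset.mem_filter.mp hx
      obtain ⟨hxu, hxs⟩ := (mem_A0 p q x).mp hxA
      exact hb ⟨hxb ▸ hxu.map _, hxb ▸ hxs⟩
    rw [this]
    simp

lemma sum_A0_mul_zero {R : Type*} [CommRing R] (h4 : (4 : R) = 0)
    (hpq : Nat.Coprime p q) (hgq : orderOf (g : ZMod q) = q - 1)
    (hq2 : 2 ∣ q - 1) (hq8div : 4 ∣ (q - 1) / 2) (hp4 : 4 ∣ p - 1)
    (c : ZMod (p * q)) (hc : ¬IsUnit c) (f : ZMod (p * q) → R) :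
    ∑ x ∈ A0 p q, f (c * x) = 0 := by
  have h0 : ZMod.castHom (dvd_mul_right p q) (ZMod p) c = 0 ∨
      ZMod.castHom (dvd_mul_left q p) (ZMod q) c = 0 := by
    by_contra hcon
    push_neg at hcon
    exact hc ((crt_isUnit_iff p q hpq c).mpr
      ⟨isUnit_iff_ne_zero.mpr hcon.1, isUnit_iff_ne_zero.mpr hcon.2⟩)
  rcases h0 with h0 | h0
  · -- φp c = 0 : fiber over φq
    rw [← Finset.sum_fiberwise (A0 p q)
      (fun x => ZMod.castHom (dvd_mul_left q p) (ZMod q) x) (fun x => f (c * x))]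
    apply Finset.sum_eq_zero
    intro b _
    obtain ⟨z, hz1, hz2⟩ := crt_lift p q hpq 1 b
    have hconst : ∀ x ∈ (A0 p q).filter
        (fun x => ZMod.castHom (dvd_mul_left q p) (ZMod q) x = b),
        f (c * x) = f (c * z) := by
      intro x hx
      obtain ⟨hxA, hxb⟩ := Finset.mem_filter.mp hx
      congr 1
      apply crt_inj p q hpq
      · rw [map_mul, map_mul, h0, zero_mul, zero_mul]
      · rw [map_mul, map_mul, hxb, hz2]
    rw [Finset.sum_congr rfl hconst, Finset.sum_const]
    obtain ⟨k, hk⟩ := fiber_q_dvd p q hpq hp4 b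
    rw [hk, mul_comm 4 k, mul_nsmul]
    rw [show (4 : ℕ) • (k • f (c * z)) = (4 : R) * (k • f (c * z)) by
      rw [nsmul_eq_mul]; norm_num]
    rw [h4, zero_mul]
  · -- φq c = 0 : fiber over φp
    rw [← Finset.sum_fiberwise (A0 p q)
      (fun x => ZMod.castHom (dvd_mul_right p q) (ZMod p) x) (fun x => f (c * x))]
    apply Finset.sum_eq_zero
    intro a _
    obtain ⟨z, hz1, hz2⟩ := crt_lift p q hpq a 1
    have hconst : ∀ x ∈ (A0 p q).filter
        (fun x => ZMod.castHom (dvd_mul_right p q) (ZMod p) x = a),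
        f (c * x) = f (c * z) := by
      intro x hx
      obtain ⟨hxA, hxa⟩ := Finset.mem_filter.mp hx
      congr 1
      apply crt_inj p q hpq
      · rw [map_mul, map_mul, hxa, hz1]
      · rw [map_mul, map_mul, h0, zero_mul, zero_mul]
    rw [Finset.sum_congr rfl hconst, Finset.sum_const]
    obtain ⟨k, hk⟩ := fiber_p_dvd p q g hpq hgq hq2 hq8div a
    rw [hk, mul_comm 4 k, mul_nsmul]
    rw [show (4 : ℕ) • (k • f (c * z)) = (4 : R) * (k • f (c * z)) by
      rw [nsmul_eq_mul]; norm_num]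
    rw [h4, zero_mul]

end Fibers2
section Rep
open scoped Classical
open Finset

variable (p q g h e : ℕ) [Fact (Nat.Prime p)] [Fact (Nat.Prime q)] [NeZero (p * q)]

lemma phiq_rep (hgq : orderOf (g : ZMod q) = q - 1) (hhq : (h : ZMod q) = 1) (s i j : ℕ) :
    ZMod.castHom (dvd_mul_left q p) (ZMod q)
      ((g : ZMod (p * q)) ^ (4 * s + i) * (h : ZMod (p * q)) ^ j)
      = (g : ZMod q) ^ (4 * s + i) := by
  rw [map_mul, map_pow, map_pow, map_natCast, map_natCast, hhq, one_pow, mul_one]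

lemma phip_rep (hgp : orderOf (g : ZMod p) = p - 1) (hhp : (h : ZMod p) = (g : ZMod p))
    (s i j : ℕ) :
    ZMod.castHom (dvd_mul_right p q) (ZMod p)
      ((g : ZMod (p * q)) ^ (4 * s + i) * (h : ZMod (p * q)) ^ j)
      = (g : ZMod p) ^ (4 * s + i + j) := by
  rw [map_mul, map_pow, map_pow, map_natCast, map_natCast, hhp, ← pow_add]

lemma rep_mem (hpq : Nat.Coprime p q)
    (hgp : orderOf (g : ZMod p) = p - 1) (hgq : orderOf (g : ZMod q) = q - 1)
    (hhp : (h : ZMod p) = (g : ZMod p)) (hhq : (h : ZMod q) = 1)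
    (hq2 : 2 ∣ q - 1) (s i j : ℕ) :
    IsUnit ((g : ZMod (p * q)) ^ (4 * s + i) * (h : ZMod (p * q)) ^ j) ∧
      (IsSquare (ZMod.castHom (dvd_mul_left q p) (ZMod q)
        ((g : ZMod (p * q)) ^ (4 * s + i) * (h : ZMod (p * q)) ^ j)) ↔ Even i) := by
  constructor
  · rw [crt_isUnit_iff p q hpq, phip_rep p q g h hgp hhp s i j,
      phiq_rep p q g h hgq hhq s i j]
    exact ⟨(g_isUnit p g hgp).pow _, (g_isUnit q g hgq).pow _⟩
  · rw [phiq_rep p q g h hgq hhq s i j, isSquare_pow_iff q g hgq hq2, Nat.even_add]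
    have : Even (4 * s) := ⟨2 * s, by ring⟩
    tauto

lemma exists_rep (hpq : Nat.Coprime p q) (hgcd : Nat.gcd (p - 1) (q - 1) = 4)
    (he : e = (p - 1) * (q - 1) / 4)
    (hgp : orderOf (g : ZMod p) = p - 1) (hgq : orderOf (g : ZMod q) = q - 1)
    (hhp : (h : ZMod p) = (g : ZMod p)) (hhq : (h : ZMod q) = 1)
    (x : ZMod (p * q)) (hx : IsUnit x) :
    ∃ s < e / 4, ∃ i < 4, ∃ j < 4,
      (Even i ↔ IsSquare (ZMod.castHom (dvd_mul_left q p) (ZMod q) x)) ∧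
      x = (g : ZMod (p * q)) ^ (4 * s + i) * (h : ZMod (p * q)) ^ j := by
  have hp2 := (Fact.out (p := p.Prime)).two_le
  have hq2' := (Fact.out (p := q.Prime)).two_le
  have hp4 : 4 ∣ p - 1 := hgcd ▸ Nat.gcd_dvd_left _ _
  have hq4 : 4 ∣ q - 1 := hgcd ▸ Nat.gcd_dvd_right _ _
  obtain ⟨P, hP⟩ := hp4
  obtain ⟨Q, hQ⟩ := hq4
  have hq2 : 2 ∣ q - 1 := ⟨2 * Q, by omega⟩
  have hPpos : 0 < P := by omega
  have hQpos : 0 < Q := by omega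
  have cop : Nat.Coprime P Q := by
    have h44 : Nat.gcd (4 * P) (4 * Q) = 4 * Nat.gcd P Q := Nat.gcd_mul_left 4 P Q
    rw [← hP, ← hQ, hgcd] at h44
    unfold Nat.Coprime
    omega
  -- discrete logs
  obtain ⟨kp, hkp⟩ := exists_dlog p g hgp (ZMod.castHom (dvd_mul_right p q) (ZMod p) x)
    (hx.map _)
  obtain ⟨kq, hkq⟩ := exists_dlog q g hgq (ZMod.castHom (dvd_mul_left q p) (ZMod q) x)
    (hx.map _)
  set i := kq % 4 with hi_def
  have hi4 : i < 4 := Nat.mod_lt _ (by norm_num)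
  set t := kq / 4 with ht_def
  have hkq4 : kq = 4 * t + i := by omega
  set j := (kp + 4 - i) % 4 with hj_def
  have hj4 : j < 4 := Nat.mod_lt _ (by norm_num)
  set w := (kp + 4 - i - j) / 4 with hw_def
  have hkpw : kp + 4 = 4 * w + i + j := by omega
  obtain ⟨N, hN1, hN2⟩ := Nat.chineseRemainder cop (w + (P - 1)) t
  set s := N % (P * Q) with hs_def
  have hsW : s ≡ w + (P - 1) [MOD P] :=
    (Nat.mod_mod_of_dvd N (dvd_mul_right P Q)).trans hN1
  have hst : s ≡ t [MOD Q] :=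
    (Nat.mod_mod_of_dvd N (dvd_mul_left Q P)).trans hN2
  have hsPQ : s < P * Q := Nat.mod_lt _ (Nat.mul_pos hPpos hQpos)
  have he4 : e / 4 = P * Q := by
    have h16 : (p - 1) * (q - 1) = 16 * (P * Q) := by rw [hP, hQ]; ring
    omega
  refine ⟨s, by rw [he4]; exact hsPQ, i, hi4, j, hj4, ?_, ?_⟩
  · -- parity condition
    rw [hkq, isSquare_pow_iff q g hgq hq2, Nat.even_iff, Nat.even_iff]
    omega
  · -- the representation
    apply crt_inj p q hpq
    · rw [phip_rep p q g h hgp hhp s i j, hkp]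
      apply pow_eq_of_modEq p g hgp
      rw [hP]
      have h1 : 4 * s + i + j ≡ 4 * (w + (P - 1)) + i + j [MOD 4 * P] :=
        Nat.ModEq.add_right _ (Nat.ModEq.add_right _ (Nat.ModEq.mul_left' 4 hsW))
      have h2 : 4 * (w + (P - 1)) + i + j = kp + 4 * P := by omega
      have h3 : kp + 4 * P ≡ kp [MOD 4 * P] := Nat.add_mod_right kp (4 * P)
      have h4 : 4 * (w + (P - 1)) + i + j ≡ kp [MOD 4 * P] := by rw [h2]; exact h3
      exact (h1.trans h4).symm
    · rw [phiq_rep p q g h hgq hhq s i j, hkq]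
      apply pow_eq_of_modEq q g hgq
      rw [hQ, hkq4]
      exact (Nat.ModEq.add_right _ (Nat.ModEq.mul_left' 4 hst)).symm

end Rep
section MainId
open scoped Classical
open Finset

variable (p q g : ℕ) [Fact (Nat.Prime p)] [Fact (Nat.Prime q)] [NeZero (p * q)]

lemma A0_A1_disjoint (x : ZMod (p * q)) (h0 : x ∈ A0 p q) (h1 : x ∈ A1 p q) : False := by
  rw [mem_A0] at h0; rw [mem_A1] at h1
  exact h1.2 h0.2

lemma unit_mem_A0_or_A1 (x : ZMod (p * q)) (hx : IsUnit x) :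
    x ∈ A0 p q ∨ x ∈ A1 p q := by
  by_cases hs : IsSquare (ZMod.castHom (dvd_mul_left q p) (ZMod q) x)
  · exact Or.inl ((mem_A0 p q x).mpr ⟨hx, hs⟩)
  · exact Or.inr ((mem_A1 p q x).mpr ⟨hx, hs⟩)

lemma main_identity {R : Type*} [CommRing R] (h4 : (4 : R) = 0)
    (hpq : Nat.Coprime p q) (hgq : orderOf (g : ZMod q) = q - 1)
    (hq2 : 2 ∣ q - 1) (hq8div : 4 ∣ (q - 1) / 2) (hp4 : 4 ∣ p - 1)
    (f : ZMod (p * q) → R) (hf : ∀ x y, f (x + y) = f x * f y) :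
    (∑ u ∈ A0 p q, f u) ^ 2
      = (((A0 p q).filter (fun w => w + 1 ∈ A0 p q)).card : R) * (∑ u ∈ A0 p q, f u)
      + (((A0 p q).filter (fun w => w + 1 ∈ A1 p q)).card : R) * (∑ u ∈ A1 p q, f u) := by
  have hstep : (∑ u ∈ A0 p q, f u) ^ 2
      = ∑ w ∈ A0 p q, ∑ u ∈ A0 p q, f ((1 + w) * u) := by
    rw [sq, Finset.sum_mul_sum]
    rw [show (∑ i ∈ A0 p q, ∑ j ∈ A0 p q, f i * f j)
        = ∑ i ∈ A0 p q, ∑ j ∈ A0 p q, f (i + j) from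
      Finset.sum_congr rfl fun u _ => Finset.sum_congr rfl fun v _ => (hf u v).symm]
    have hinner : ∀ u ∈ A0 p q, (∑ v ∈ A0 p q, f (u + v))
        = ∑ w ∈ A0 p q, f ((1 + w) * u) := by
      intro u hu
      have huu := ((mem_A0 p q u).mp hu).1
      conv_lhs => rw [← image_A0_A0 p q g hpq hgq hq2 hu]
      rw [Finset.sum_image (fun a _ b _ hab => huu.mul_right_injective hab)]
      apply Finset.sum_congr rfl
      intro w _
      congr 1
      ring
    rw [Finset.sum_congr rfl hinner, Finset.sum_comm]
  rw [hstep]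
  -- split the w-sum
  rw [← Finset.sum_filter_add_sum_filter_not (A0 p q) (fun w => w + 1 ∈ A0 p q)]
  rw [← Finset.sum_filter_add_sum_filter_not
    ((A0 p q).filter (fun w => ¬ (w + 1 ∈ A0 p q))) (fun w => w + 1 ∈ A1 p q)]
  have e1 : ∀ w ∈ (A0 p q).filter (fun w => w + 1 ∈ A0 p q),
      (∑ u ∈ A0 p q, f ((1 + w) * u)) = ∑ u ∈ A0 p q, f u := by
    intro w hw
    obtain ⟨hwA, hw1⟩ := Finset.mem_filter.mp hw
    rw [add_comm 1 w] at *
    have huu := ((mem_A0 p q (w + 1)).mp hw1).1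
    rw [← Finset.sum_image (fun a _ b _ hab => huu.mul_right_injective hab) (s := A0 p q)
      (g := fun z => ((w + 1) * z)) (f := f)]
    rw [image_A0_A0 p q g hpq hgq hq2 hw1]
  have e2 : ∀ w ∈ ((A0 p q).filter (fun w => ¬ (w + 1 ∈ A0 p q))).filter
      (fun w => w + 1 ∈ A1 p q),
      (∑ u ∈ A0 p q, f ((1 + w) * u)) = ∑ u ∈ A1 p q, f u := by
    intro w hw
    obtain ⟨_, hw1⟩ := Finset.mem_filter.mp hw
    rw [add_comm 1 w] at *
    have huu := ((mem_A1 p q (w + 1)).mp hw1).1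
    rw [← Finset.sum_image (fun a _ b _ hab => huu.mul_right_injective hab) (s := A0 p q)
      (g := fun z => ((w + 1) * z)) (f := f)]
    rw [image_A0_A1 p q g hpq hgq hq2 hw1]
  have e3 : ∀ w ∈ (((A0 p q).filter (fun w => ¬ (w + 1 ∈ A0 p q))).filter
      (fun w => ¬ (w + 1 ∈ A1 p q))),
      (∑ u ∈ A0 p q, f ((1 + w) * u)) = 0 := by
    intro w hw
    obtain ⟨hw', hw1⟩ := Finset.mem_filter.mp hw
    obtain ⟨_, hw0⟩ := Finset.mem_filter.mp hw'
    have hnu : ¬ IsUnit (1 + w) := by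
      rw [add_comm 1 w]
      intro hu
      rcases unit_mem_A0_or_A1 p q (w + 1) hu with hc | hc
      · exact hw0 hc
      · exact hw1 hc
    exact sum_A0_mul_zero p q g h4 hpq hgq hq2 hq8div hp4 (1 + w) hnu f
  rw [Finset.sum_congr rfl e1, Finset.sum_congr rfl e2, Finset.sum_congr rfl e3]
  rw [Finset.sum_const, Finset.sum_const, Finset.sum_const, smul_zero, add_zero,
    nsmul_eq_mul, nsmul_eq_mul]
  congr 3
  rw [Finset.filter_filter]
  congr 1
  apply Finset.filter_congr
  intro w _
  constructor
  · exact fun hx => hx.2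
  · exact fun hx => ⟨fun h0 => A0_A1_disjoint p q (w + 1) h0 hx, hx⟩
end MainId
section Final
open scoped Classical
open Finset

lemma image_add_inter_card {α : Type*} [AddCommGroup α] [One α] [DecidableEq α]
    (s t : Finset α) :
    ((s.image (fun w => w + 1)) ∩ t).card = (s.filter (fun w => w + 1 ∈ t)).card := by
  have himg : (s.image (fun w => (w + 1 : α))) ∩ t
      = (s.filter (fun w => w + 1 ∈ t)).image (fun w => (w + 1 : α)) := by
    ext z
    simp only [Finset.mem_inter, Finset.mem_image, Finset.mem_filter]
    constructor
    · rintro ⟨⟨w, hw, rfl⟩, hz⟩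
      exact ⟨w, ⟨hw, hz⟩, rfl⟩
    · rintro ⟨w, ⟨hw, hz⟩, rfl⟩
      exact ⟨⟨w, hw, rfl⟩, hz⟩
  rw [himg, Finset.card_image_of_injective _ (add_left_injective 1)]
end Final

open Finset in
open scoped Classical in
theorem stmt14
    (p q : ℕ) (hp : Nat.Prime p) (hq : Nat.Prime q) (hne : p ≠ q)
    (hpo : Odd p) (hqo : Odd q)
    (hgcd : Nat.gcd (p - 1) (q - 1) = 4)
    (e : ℕ) (he : e = (p - 1) * (q - 1) / 4)
    (g h : ℕ)
    (hgp : orderOf (g : ZMod p) = p - 1)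
    (hgq : orderOf (g : ZMod q) = q - 1)
    (hhp : (h : ZMod p) = (g : ZMod p))
    (hhq : (h : ZMod q) = 1)
    (D : ℕ → Finset (ZMod (p * q)))
    (hD : ∀ i, D i = (Finset.range (e / 4) ×ˢ Finset.range 4).image
        (fun sj => (g : ZMod (p * q)) ^ (4 * sj.1 + i) * (h : ZMod (p * q)) ^ sj.2))
    (ℓ : ℕ) (β : TruncatedWittVector 2 2 (GaloisField 2 ℓ))
    (hβu : IsUnit β) (hβo : orderOf β = p * q)
    (hq8 : q % 8 = 1) :
    (∑ u ∈ D 0 ∪ D 2, β ^ u.val) ^ 2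
      = ((((D 0 ∪ D 2).image (fun w => w + 1) ∩ (D 0 ∪ D 2)).card : ℕ)
            : TruncatedWittVector 2 2 (GaloisField 2 ℓ))
          * (∑ u ∈ D 0 ∪ D 2, β ^ u.val)
        + ((((D 0 ∪ D 2).image (fun w => w + 1) ∩ (D 1 ∪ D 3)).card : ℕ)
            : TruncatedWittVector 2 2 (GaloisField 2 ℓ))
          * (∑ u ∈ D 1 ∪ D 3, β ^ u.val) := by
  haveI : Fact (Nat.Prime p) := ⟨hp⟩
  haveI : Fact (Nat.Prime q) := ⟨hq⟩
  haveI : NeZero (p * q) := ⟨Nat.mul_ne_zero hp.ne_zero hq.ne_zero⟩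
  have hp2 := hp.two_le
  have hq2' := hq.two_le
  have hpq : Nat.Coprime p q := (Nat.coprime_primes hp hq).mpr hne
  have hp4 : 4 ∣ p - 1 := hgcd ▸ Nat.gcd_dvd_left _ _
  have hq4 : 4 ∣ q - 1 := hgcd ▸ Nat.gcd_dvd_right _ _
  have hq2 : 2 ∣ q - 1 := by omega
  have hq8div : 4 ∣ (q - 1) / 2 := by omega
  -- identify the unions with A0 and A1
  have hH0 : D 0 ∪ D 2 = A0 p q := by
    rw [hD 0, hD 2]
    ext x
    rw [Finset.mem_union, mem_A0]
    constructor
    · intro hx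
      rcases hx with hx | hx <;>
      · obtain ⟨⟨s, j⟩, hsj, rfl⟩ := Finset.mem_image.mp hx
        obtain ⟨hrm1, hrm2⟩ := rep_mem p q g h hpq hgp hgq hhp hhq hq2 s _ j
        exact ⟨hrm1, hrm2.mpr (by norm_num)⟩
    · rintro ⟨hxu, hxs⟩
      obtain ⟨s, hs, i, hi, j, hj, hpar, heq⟩ :=
        exists_rep p q g h e hpq hgcd he hgp hgq hhp hhq x hxu
      have hieven : Even i := hpar.mpr hxs
      rw [Nat.even_iff] at hieven
      have : i = 0 ∨ i = 2 := by omega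
      rcases this with rfl | rfl
      · exact Or.inl (Finset.mem_image.mpr ⟨(s, j),
          Finset.mem_product.mpr ⟨Finset.mem_range.mpr hs, Finset.mem_range.mpr hj⟩, heq.symm⟩)
      · exact Or.inr (Finset.mem_image.mpr ⟨(s, j),
          Finset.mem_product.mpr ⟨Finset.mem_range.mpr hs, Finset.mem_range.mpr hj⟩, heq.symm⟩)
  have hH1 : D 1 ∪ D 3 = A1 p q := by
    rw [hD 1, hD 3]
    ext x
    rw [Finset.mem_union, mem_A1]
    constructor
    · intro hx
      rcases hx with hx | hx <;>
      · obtain ⟨⟨s, j⟩, hsj, rfl⟩ := Finset.mem_image.mp hx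
        obtain ⟨hrm1, hrm2⟩ := rep_mem p q g h hpq hgp hgq hhp hhq hq2 s _ j
        refine ⟨hrm1, fun hsq => ?_⟩
        have := hrm2.mp hsq
        rw [Nat.even_iff] at this
        omega
    · rintro ⟨hxu, hxs⟩
      obtain ⟨s, hs, i, hi, j, hj, hpar, heq⟩ :=
        exists_rep p q g h e hpq hgcd he hgp hgq hhp hhq x hxu
      have hiodd : ¬ Even i := fun hc => hxs (hpar.mp hc)
      rw [Nat.even_iff] at hiodd
      have : i = 1 ∨ i = 3 := by omega
      rcases this with rfl | rfl
      · exact Or.inl (Finset.mem_image.mpr ⟨(s, j),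
          Finset.mem_product.mpr ⟨Finset.mem_range.mpr hs, Finset.mem_range.mpr hj⟩, heq.symm⟩)
      · exact Or.inr (Finset.mem_image.mpr ⟨(s, j),
          Finset.mem_product.mpr ⟨Finset.mem_range.mpr hs, Finset.mem_range.mpr hj⟩, heq.symm⟩)
  rw [hH0, hH1]
  rw [image_add_inter_card (A0 p q) (A0 p q), image_add_inter_card (A0 p q) (A1 p q)]
  have hf : ∀ x y : ZMod (p * q), β ^ (x + y).val = β ^ x.val * β ^ y.val := by
    intro x y
    rw [ZMod.val_add, ← pow_add]
    have hmo := pow_mod_orderOf β (x.val + y.val)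
    rw [hβo] at hmo
    exact hmo
  exact main_identity p q g (four_eq_zero (GaloisField 2 ℓ)) hpq hgq hq2 hq8div hp4
    (fun x => β ^ x.val) hf
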